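/- Let A ∈ M_n(ℂ) and λ ∈ ℂ with (A − λ I_n)ⁿ = 0 (spectrum of A concentrated at λ), let B = diag(b₁,…,b_m) with b_k = ±1, let Π ∈ M_{n×m}(ℂ), and let S ∈ M_n(ℂ) be invertible. Let c₁,…,c_{n+1} ∈ ℂ, not all zero, satisfy Σ_{s=1}^{n+1} c_s (−1)^s k(k+1)⋯(k+s−1) = 0 for all 1 ≤ k ≤ n. Then the matrix function W(z) := I_m − i B Π* S^{-1} (A − z I_n)^{-1} Π satisfies Σ_{s=1}^{n+1} c_s (z − λ)^s W^{(s)}(z) = 0 for all z ≠ λ, where W^{(s)} denotes the s-th derivative in z taken entrywise. (Hence the system W_x = (izD − [D,ρ̃])W − izWD with GBDT-generated ρ̃ and ρ ≡ 0 is bispectral: B(z)w_A = 0 for B(z) = Σ c_s(z−λ)^s ∂^s/∂z^s.) -/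

import Mathlib

open Matrix


lemma resolvent_eq {n : ℕ} (A : Matrix (Fin n) (Fin n) ℂ) (lam : ℂ)
    (hA : (A - lam • 1) ^ n = 0) (w : ℂ) (hw : w ≠ lam) :
    (A - w • 1)⁻¹ = -∑ k ∈ Finset.range n, ((w - lam) ^ (-(k + 1 : ℤ))) • (A - lam • 1) ^ k := by
  have ht : w - lam ≠ 0 := sub_ne_zero.2 hw
  apply Matrix.inv_eq_right_inv
  have h1 : A - w • 1 = (A - lam • 1) - (w - lam) • 1 := by
    rw [sub_smul]; abel
  rw [h1]
  set N := A - lam • 1 with hN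
  set t := w - lam with htt
  rw [mul_neg, sub_mul, Matrix.mul_sum, Matrix.smul_mul, Matrix.mul_sum, neg_sub]
  have h2 : (∑ k ∈ Finset.range n, t • (t ^ (-(k + 1 : ℤ)) • N ^ k))
      - ∑ k ∈ Finset.range n, N * (t ^ (-(k + 1 : ℤ)) • N ^ k)
      = ∑ k ∈ Finset.range n, (t ^ (-(k:ℤ)) • N ^ k - t ^ (-(((k+1):ℕ):ℤ)) • N ^ (k+1)) := by
    rw [← Finset.sum_sub_distrib]
    refine Finset.sum_congr rfl fun k _ => ?_
    rw [Matrix.mul_smul, smul_smul, ← pow_succ']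
    congr 2
    rw [← zpow_one_add₀ ht]
    push_cast
    ring_nf
  simp only [Finset.smul_sum, one_mul]
  rw [h2, Finset.sum_range_sub' (fun k => t ^ (-(k:ℤ)) • N ^ k)]
  simp [hA]

lemma iter_deriv_aux (lam : ℂ) (n : ℕ) (a : ℕ → ℂ) (d : ℂ) (s : ℕ) :
    ∀ z : ℂ, z ≠ lam →
      iteratedDeriv s (fun w => d + ∑ k ∈ Finset.range n, a k * (w - lam) ^ (-(k + 1 : ℤ))) z
      = (if s = 0 then d else 0) + ∑ k ∈ Finset.range n,
          a k * (∏ j ∈ Finset.range s, (-((k + 1 + j : ℕ) : ℂ))) * (z - lam) ^ (-(k + 1 + s : ℤ)) := by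
  induction s with
  | zero => intro z hz; simp [iteratedDeriv_zero]
  | succ s ih =>
    intro z hz
    rw [iteratedDeriv_succ]
    have hev : iteratedDeriv s (fun w => d + ∑ k ∈ Finset.range n, a k * (w - lam) ^ (-(k + 1 : ℤ)))
        =ᶠ[nhds z] fun w => (if s = 0 then d else 0) + ∑ k ∈ Finset.range n,
          a k * (∏ j ∈ Finset.range s, (-((k + 1 + j : ℕ) : ℂ))) * (w - lam) ^ (-(k + 1 + s : ℤ)) := by
      filter_upwards [isOpen_compl_singleton.mem_nhds (by simpa using hz : z ∈ ({lam}ᶜ : Set ℂ))] with w hw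
      exact ih w hw
    rw [hev.deriv_eq]
    have hd : HasDerivAt (fun w : ℂ => (if s = 0 then d else 0) + ∑ k ∈ Finset.range n,
          a k * (∏ j ∈ Finset.range s, (-((k + 1 + j : ℕ) : ℂ))) * (w - lam) ^ (-(k + 1 + s : ℤ)))
        (∑ k ∈ Finset.range n,
          a k * (∏ j ∈ Finset.range s, (-((k + 1 + j : ℕ) : ℂ)))
            * ((-(k + 1 + s : ℤ)) * (z - lam) ^ (-(k + 1 + s : ℤ) - 1))) z := by
      apply HasDerivAt.const_add
      apply HasDerivAt.fun_sum
      intro k _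
      have h1 : HasDerivAt (fun w : ℂ => (w - lam) ^ (-(k + 1 + s : ℤ)))
          ((-(k + 1 + s : ℤ)) * (z - lam) ^ (-(k + 1 + s : ℤ) - 1)) z := by
        have := (hasDerivAt_zpow (-(k + 1 + s : ℤ)) (z - lam)
          (Or.inl (sub_ne_zero.2 hz))).comp z ((hasDerivAt_id z).sub_const lam)
        simpa [Function.comp_def] using this
      simpa [mul_assoc] using h1.const_mul (a k * (∏ j ∈ Finset.range s, (-((k + 1 + j : ℕ) : ℂ))))
    rw [hd.deriv]
    rw [if_neg (Nat.succ_ne_zero s), zero_add]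
    refine Finset.sum_congr rfl fun k _ => ?_
    rw [Finset.prod_range_succ]
    have he : (-(k + 1 + s : ℤ) - 1) = (-(k + 1 + (s+1) : ℤ)) := by push_cast; ring
    rw [he]
    push_cast
    ring

/-- Bispectrality: if the spectrum of `A` is concentrated at `λ` and the coefficients
`c_s` satisfy `Σ_{s=1}^{n+1} c_s (−1)^s k(k+1)⋯(k+s−1) = 0` for `1 ≤ k ≤ n`, then
`W(z) = I − iBΠ*S⁻¹(A−zI)⁻¹Π` satisfies `Σ_{s=1}^{n+1} c_s (z−λ)^s W^{(s)}(z) = 0`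
for all `z ≠ λ`. -/
theorem stmt_18 {n m : ℕ}
    (A : Matrix (Fin n) (Fin n) ℂ) (lam : ℂ)
    (hA : (A - lam • 1) ^ n = 0)
    (b : Fin m → ℝ) (hb : ∀ k, b k = 1 ∨ b k = -1)
    (B : Matrix (Fin m) (Fin m) ℂ)
    (hB : B = Matrix.diagonal (fun k => (b k : ℂ)))
    (Pm : Matrix (Fin n) (Fin m) ℂ)
    (S : Matrix (Fin n) (Fin n) ℂ) (hSinv : IsUnit S)
    (c : ℕ → ℂ)
    (hc0 : ∃ s ∈ Finset.Icc 1 (n + 1), c s ≠ 0)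
    (hc : ∀ k : ℕ, 1 ≤ k → k ≤ n →
      ∑ s ∈ Finset.Icc 1 (n + 1),
        c s * (-1 : ℂ) ^ s * ∏ j ∈ Finset.range s, ((k + j : ℕ) : ℂ) = 0) :
    ∀ z : ℂ, z ≠ lam → ∀ (i j : Fin m),
      ∑ s ∈ Finset.Icc 1 (n + 1),
        c s * (z - lam) ^ s
          * iteratedDeriv s
              (fun w : ℂ =>
                ((1 : Matrix (Fin m) (Fin m) ℂ)
                  - Complex.I • (B * Pmᴴ * S⁻¹ * (A - w • 1)⁻¹ * Pm)) i j) z = 0 := by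
  intro z hz i j
  have ht : z - lam ≠ 0 := sub_ne_zero.2 hz
  set a : ℕ → ℂ := fun k =>
    Complex.I * ((B * Pmᴴ * S⁻¹ * (A - lam • 1) ^ k * Pm : Matrix (Fin m) (Fin m) ℂ) i j) with ha
  set d : ℂ := (1 : Matrix (Fin m) (Fin m) ℂ) i j with hd
  -- Step 1: the entry function agrees with a Laurent polynomial away from lam
  have hfun : ∀ w : ℂ, w ≠ lam →
      ((1 : Matrix (Fin m) (Fin m) ℂ)
        - Complex.I • (B * Pmᴴ * S⁻¹ * (A - w • 1)⁻¹ * Pm)) i j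
      = d + ∑ k ∈ Finset.range n, a k * (w - lam) ^ (-(k + 1 : ℤ)) := by
    intro w hw
    rw [resolvent_eq A lam hA w hw]
    simp only [Matrix.mul_neg, Matrix.neg_mul, Matrix.mul_sum, Matrix.sum_mul,
      Matrix.mul_smul, Matrix.smul_mul, smul_neg, Matrix.sub_apply, Matrix.smul_apply,
      Matrix.neg_apply, Matrix.sum_apply, smul_eq_mul, Finset.mul_sum, ha, hd]
    rw [sub_neg_eq_add]
    congr 1
    refine Finset.sum_congr rfl fun k _ => ?_
    simp only [Matrix.mul_assoc]
    ring
  -- Step 2: rewrite iterated derivatives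
  have hIcc : ∀ s ∈ Finset.Icc 1 (n+1),
      iteratedDeriv s (fun w : ℂ =>
        ((1 : Matrix (Fin m) (Fin m) ℂ)
          - Complex.I • (B * Pmᴴ * S⁻¹ * (A - w • 1)⁻¹ * Pm)) i j) z
      = ∑ k ∈ Finset.range n,
          a k * (∏ j ∈ Finset.range s, (-((k + 1 + j : ℕ) : ℂ))) * (z - lam) ^ (-(k + 1 + s : ℤ)) := by
    intro s hs
    have hev : (fun w : ℂ =>
        ((1 : Matrix (Fin m) (Fin m) ℂ)
          - Complex.I • (B * Pmᴴ * S⁻¹ * (A - w • 1)⁻¹ * Pm)) i j)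
        =ᶠ[nhds z] fun w => d + ∑ k ∈ Finset.range n, a k * (w - lam) ^ (-(k + 1 : ℤ)) := by
      filter_upwards [isOpen_compl_singleton.mem_nhds (by simpa using hz : z ∈ ({lam}ᶜ : Set ℂ))] with w hw
      exact hfun w hw
    rw [hev.iteratedDeriv_eq s, iter_deriv_aux lam n a d s z hz,
      if_neg (by simp at hs; omega : s ≠ 0), zero_add]
  rw [Finset.sum_congr rfl (fun s hs => by rw [hIcc s hs])]
  -- Step 3: swap sums and use hc
  simp only [Finset.mul_sum]
  rw [Finset.sum_comm]
  apply Finset.sum_eq_zero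
  intro k hk
  have hkn : k < n := Finset.mem_range.mp hk
  have hterm : ∀ s ∈ Finset.Icc 1 (n+1),
      c s * (z - lam) ^ s * (a k * (∏ j ∈ Finset.range s, (-((k + 1 + j : ℕ) : ℂ)))
        * (z - lam) ^ (-(k + 1 + s : ℤ)))
      = (a k * (z - lam) ^ (-(k + 1 : ℤ)))
        * (c s * (-1 : ℂ) ^ s * ∏ j ∈ Finset.range s, (((k + 1) + j : ℕ) : ℂ)) := by
    intro s _
    have hpow : (z - lam) ^ s * (z - lam) ^ (-(k + 1 + s : ℤ)) = (z - lam) ^ (-(k + 1 : ℤ)) := by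
      rw [← zpow_natCast (z - lam) s, ← zpow_add₀ ht]
      congr 1
      push_cast
      ring
    have hprod : (∏ j ∈ Finset.range s, (-((k + 1 + j : ℕ) : ℂ)))
        = (-1 : ℂ) ^ s * ∏ j ∈ Finset.range s, (((k + 1) + j : ℕ) : ℂ) := by
      have hng : ∀ j' : ℕ, (-((k + 1 + j' : ℕ) : ℂ)) = (-1) * ((k + 1 + j' : ℕ) : ℂ) :=
        fun j' => by ring
      rw [Finset.prod_congr rfl (fun j' _ => hng j'), Finset.prod_mul_distrib,
        Finset.prod_const, Finset.card_range]
    rw [hprod, ← hpow]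
    ring
  rw [Finset.sum_congr rfl hterm, ← Finset.mul_sum, hc (k+1) (by omega) (by omega), mul_zero]
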